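/- Consider the trivial extension F^a[u] = 0, ∂_μ g = 0, and let {g·q_a[u], ϑ^μ[u]} be a conservation law multiplier for it and for a current J^μ[u,g], i.e. g F^a q_a + (∂_μ g)ϑ^μ = D_μ J^μ for every smooth u and g. Then: (i) ϑ^μ[u] is a conserved current of F^a[u] = 0 with multiplier q_a[u], i.e. F^a q_a = D_μ ϑ^μ for every smooth u; (ii) g ϑ^μ[u] is a conserved current of the trivial extension with the same multiplier {g q_a, ϑ^μ}, and g ϑ^μ − J^μ is identically conserved. -/

import Mathlib

namespace Paper

/-- The base space ℝ^{D+1} (coordinates x^μ, μ = 0,…,D). -/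
abbrev Ed (D : ℕ) := Fin (D + 1) → ℝ

/-- Partial derivative ∂_μ of a real function on ℝ^{D+1}. -/
noncomputable def pd {D : ℕ} (μ : Fin (D + 1)) (f : Ed D → ℝ) : Ed D → ℝ :=
  fun x => fderiv ℝ f x (Pi.single μ 1)

/-- Iterated partial derivatives ∂_{μ₁…μ_k} along a list of directions. -/
noncomputable def pds {D : ℕ} : List (Fin (D + 1)) → (Ed D → ℝ) → Ed D → ℝ
  | [], f => f
  | μ :: l, f => pd μ (pds l f)

/-- Total divergence D_μ J^μ of a current. -/
noncomputable def Dvg {D : ℕ} (J : Fin (D + 1) → Ed D → ℝ) : Ed D → ℝ :=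
  fun x => ∑ μ, pd μ (J μ) x

/-- Multi-indices of order ≤ m: ordered tuples of coordinate directions. -/
abbrev MIdx (m D : ℕ) := Σ k : Fin (m + 1), (Fin (k : ℕ) → Fin (D + 1))

def MIdx.toList {m D : ℕ} (β : MIdx m D) : List (Fin (D + 1)) := List.ofFn β.2

def zeroIdx {m D : ℕ} : MIdx m D := ⟨⟨0, Nat.succ_pos m⟩, fun t => t.elim0⟩

def oneIdx {m D : ℕ} (hm : 0 < m) (μ : Fin (D + 1)) : MIdx m D :=
  ⟨⟨1, Nat.succ_lt_succ hm⟩, fun _ => μ⟩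

/-- The jet space of order m for fields indexed by ι. -/
abbrev Jet (ι : Type) (m D : ℕ) := (ι × MIdx m D) → ℝ

/-- The m-jet of a field configuration at a point. -/
noncomputable def jet {D : ℕ} {ι : Type} (m : ℕ) (u : ι → Ed D → ℝ) (x : Ed D) :
    Jet ι m D := fun c => pds (MIdx.toList c.2) (u c.1) x

/-- Evaluation of a local function on a field configuration: f[u](x). -/
noncomputable def realize {D : ℕ} {ι : Type} (m : ℕ) (f : Ed D × Jet ι m D → ℝ)
    (u : ι → Ed D → ℝ) : Ed D → ℝ :=
  fun x => f (x, jet m u x)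

/-- Partial derivative ∂f/∂(∂_β u_i) of a local function w.r.t. a jet coordinate. -/
noncomputable def jpd {D : ℕ} {ι : Type} [Fintype ι] [DecidableEq ι] {m : ℕ}
    (f : Ed D × Jet ι m D → ℝ) (c : ι × MIdx m D) : Ed D × Jet ι m D → ℝ :=
  fun p => fderiv ℝ f p (0, Pi.single c 1)

/-- Smooth fields on Ω. -/
def SmoothFields {D : ℕ} {ι : Type} (Ω : Set (Ed D)) (u : ι → Ed D → ℝ) : Prop :=
  ∀ i, ContDiffOn ℝ (⊤ : ℕ∞) (u i) Ω

/-- Variation δf of a local function along a characteristic, the latter given by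
its realized component functions v_i. -/
noncomputable def variation {D : ℕ} {ι : Type} [Fintype ι] [DecidableEq ι] (m : ℕ)
    (f : Ed D × Jet ι m D → ℝ) (u v : ι → Ed D → ℝ) : Ed D → ℝ :=
  fun x => ∑ c : ι × MIdx m D, jpd f c (x, jet m u x) * pds (MIdx.toList c.2) (v c.1) x

/-- Euler–Lagrange derivative E^i(f) of a local function, evaluated on u. -/
noncomputable def EL {D : ℕ} {ι : Type} [Fintype ι] [DecidableEq ι] (m : ℕ)
    (f : Ed D × Jet ι m D → ℝ) (u : ι → Ed D → ℝ) (i : ι) : Ed D → ℝ :=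
  fun x => ∑ β : MIdx m D, (-1 : ℝ) ^ (β.1 : ℕ) *
    pds (MIdx.toList β) (fun y => jpd f (i, β) (y, jet m u y)) x

/-- The general integration-by-parts boundary current 𝒢^μ. -/
noncomputable def bdryG {D : ℕ} {A : Type} [Fintype A] (m : ℕ)
    (G : A × MIdx m D → Ed D → ℝ) (ε : A → Ed D → ℝ) (μ : Fin (D + 1)) : Ed D → ℝ :=
  fun x => ∑ a : A, ∑ k : Fin m, ∑ lam : Fin (k : ℕ) → Fin (D + 1),
    ∑ j ∈ Finset.range ((k : ℕ) + 1),
      (-1 : ℝ) ^ j *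
        pds ((List.ofFn lam).take j)
          (G (a, ⟨⟨(k : ℕ) + 1, Nat.succ_lt_succ k.isLt⟩, Fin.cons μ lam⟩)) x *
        pds ((List.ofFn lam).drop j) (ε a) x

/-- Ĝ_α = Σ_β (−1)^{|β|} ∂_β G_α^β. -/
noncomputable def hatG {D : ℕ} {A : Type} (m : ℕ)
    (G : A × MIdx m D → Ed D → ℝ) (a : A) : Ed D → ℝ :=
  fun x => ∑ β : MIdx m D, (-1 : ℝ) ^ (β.1 : ℕ) * pds (MIdx.toList β) (G (a, β)) x

/-- The boundary current j^μ of a local function f w.r.t. a characteristic v at u. -/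
noncomputable def lfBdry {D : ℕ} {ι : Type} [Fintype ι] [DecidableEq ι] (m : ℕ)
    (f : Ed D × Jet ι m D → ℝ) (u v : ι → Ed D → ℝ) (μ : Fin (D + 1)) : Ed D → ℝ :=
  bdryG m (fun c x => jpd f c (x, jet m u x)) v μ

/-- j^μ_{(Fρ)}: the boundary current of F^aρ_a in which ρ_a is not differentiated
(ρ_a substituted after the differentiations). -/
noncomputable def jFrho {D : ℕ} {ι κ : Type} [Fintype ι] [DecidableEq ι] [Fintype κ] (m : ℕ)
    (F : κ → Ed D × Jet ι m D → ℝ) (u : ι → Ed D → ℝ) (ρ : κ → Ed D → ℝ)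
    (v : ι → Ed D → ℝ) (μ : Fin (D + 1)) : Ed D → ℝ :=
  bdryG m (fun c x => ∑ a, jpd (F a) c (x, jet m u x) * ρ a x) v μ

/-- j^μ_{(F̃q)}|_{F̃=F}: only q_a is differentiated, F^a treated as a function of x. -/
noncomputable def jFtilq {D : ℕ} {ι κ : Type} [Fintype ι] [DecidableEq ι] [Fintype κ] (m : ℕ)
    (F q : κ → Ed D × Jet ι m D → ℝ) (u v : ι → Ed D → ℝ) (μ : Fin (D + 1)) : Ed D → ℝ :=
  bdryG m (fun c x => ∑ a, F a (x, jet m u x) * jpd (q a) c (x, jet m u x)) v μ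

/-- The adjoint equations' left-hand side E^i(F^aρ_a), with the ρ_a treated as
independent fields and their values substituted after the differentiations. -/
noncomputable def adjointOp {D : ℕ} {ι κ : Type} [Fintype ι] [DecidableEq ι] [Fintype κ] (m : ℕ)
    (F : κ → Ed D × Jet ι m D → ℝ) (u : ι → Ed D → ℝ) (ρ : κ → Ed D → ℝ) (i : ι) : Ed D → ℝ :=
  fun x => ∑ β : MIdx m D, (-1 : ℝ) ^ (β.1 : ℕ) *
    pds (MIdx.toList β) (fun y => ∑ a, jpd (F a) (i, β) (y, jet m u y) * ρ a y) x

/-- Solutions of the system F^a = 0 on Ω. -/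
def IsSol {D : ℕ} {ι κ : Type} (m : ℕ) (Ω : Set (Ed D)) (F : κ → Ed D × Jet ι m D → ℝ)
    (u : ι → Ed D → ℝ) : Prop :=
  SmoothFields Ω u ∧ ∀ a, ∀ x ∈ Ω, realize m (F a) u x = 0

/-- A characteristic δu (given by local functions) is a symmetry of F = 0. -/
def IsSymmetry {D : ℕ} {ι κ : Type} [Fintype ι] [DecidableEq ι] (m : ℕ) (Ω : Set (Ed D))
    (F : κ → Ed D × Jet ι m D → ℝ) (δu : ι → Ed D × Jet ι m D → ℝ) : Prop :=
  ∀ u, IsSol m Ω F u → ∀ a, ∀ x ∈ Ω,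
    variation m (F a) u (fun i => realize m (δu i) u) x = 0

/-- The u-part of a combined (u, ρ) jet. -/
def uPartJet {D : ℕ} {ι κ : Type} {m : ℕ} (z : Jet (ι ⊕ κ) m D) : Jet ι m D :=
  fun c => z (Sum.inl c.1, c.2)

/-- The auxiliary Lagrangian L̂ = F^a ρ_a as a local function of the combined fields (u, ρ). -/
noncomputable def Lhat {D : ℕ} {ι κ : Type} [Fintype κ] {m : ℕ}
    (F : κ → Ed D × Jet ι m D → ℝ) : Ed D × Jet (ι ⊕ κ) m D → ℝ :=
  fun p => ∑ a, F a (p.1, uPartJet p.2) * p.2 (Sum.inr a, zeroIdx)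

/-- The product F^a q_a as a single local function of u. -/
noncomputable def prodFq {D : ℕ} {ι κ : Type} [Fintype κ] {m : ℕ}
    (F q : κ → Ed D × Jet ι m D → ℝ) : Ed D × Jet ι m D → ℝ :=
  fun p => ∑ a, F a p * q a p

/-- Conservation law multiplier: F^a q_a = D_μ J^μ for every smooth u. -/
def Multiplier {D : ℕ} {ι κ : Type} [Fintype κ] (m : ℕ) (Ω : Set (Ed D))
    (F q : κ → Ed D × Jet ι m D → ℝ) (J : Fin (D + 1) → Ed D × Jet ι m D → ℝ) : Prop :=
  ∀ u, SmoothFields Ω u → ∀ x ∈ Ω,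
    (∑ a, realize m (F a) u x * realize m (q a) u x) = Dvg (fun μ => realize m (J μ) u) x

/-- Equivalence of configuration-indexed local currents relative to the system F = 0:
the difference is an identically conserved local current plus a local current
vanishing on all solutions. -/
def EquivCurrents {D : ℕ} {ι κ : Type} [Fintype ι] (m : ℕ) (Ω : Set (Ed D))
    (F : κ → Ed D × Jet ι m D → ℝ)
    (C1 C2 : (ι → Ed D → ℝ) → Fin (D + 1) → Ed D → ℝ) : Prop :=
  ∃ (m' : ℕ) (Jb Jh : Fin (D + 1) → Ed D × Jet ι m' D → ℝ),
    (∀ μ, ContDiff ℝ (⊤ : ℕ∞) (Jb μ)) ∧ (∀ μ, ContDiff ℝ (⊤ : ℕ∞) (Jh μ)) ∧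
    (∀ u, SmoothFields Ω u → ∀ μ, ∀ x ∈ Ω,
      C1 u μ x - C2 u μ x = realize m' (Jb μ) u x + realize m' (Jh μ) u x) ∧
    (∀ u, SmoothFields Ω u → ∀ x ∈ Ω, Dvg (fun μ => realize m' (Jb μ) u) x = 0) ∧
    (∀ u, IsSol m Ω F u → ∀ μ, ∀ x ∈ Ω, realize m' (Jh μ) u x = 0)

/-- Linearization G^a of F^a around the configuration u. -/
noncomputable def linearize {D : ℕ} {ι κ : Type} [Fintype ι] (m : ℕ)
    (F : κ → Ed D × Jet ι m D → ℝ) (u : ι → Ed D → ℝ) :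
    κ → Ed D × Jet ι m D → ℝ :=
  fun a p => fderiv ℝ (F a) (p.1, jet m u p.1) ((0 : Ed D), p.2)

/- ### Extended systems: fields (u, g), with F depending on g but not on its derivatives. -/

/-- Domain of extended local functions: base point, jet of u, and the values of g. -/
abbrev PJet (ι γ : Type) (m D : ℕ) := Ed D × Jet ι m D × (γ → ℝ)

noncomputable def realizeP {D : ℕ} {ι γ : Type} (m : ℕ)
    (f : PJet ι γ m D → ℝ) (u : ι → Ed D → ℝ) (g : γ → Ed D → ℝ) : Ed D → ℝ :=
  fun x => f (x, jet m u x, fun l => g l x)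

/-- ∂f/∂g_l for extended local functions. -/
noncomputable def gpd {D : ℕ} {ι γ : Type} [Fintype ι] [Fintype γ] [DecidableEq γ] {m : ℕ}
    (f : PJet ι γ m D → ℝ) (l : γ) : PJet ι γ m D → ℝ :=
  fun p => fderiv ℝ f p (0, 0, Pi.single l 1)

/-- ∂f/∂(∂_β u_i) for extended local functions. -/
noncomputable def jpdP {D : ℕ} {ι γ : Type} [Fintype ι] [DecidableEq ι] [Fintype γ] {m : ℕ}
    (f : PJet ι γ m D → ℝ) (c : ι × MIdx m D) : PJet ι γ m D → ℝ :=
  fun p => fderiv ℝ f p (0, Pi.single c 1, 0)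

/-- An extended local function viewed as a local function of the combined fields (u, g). -/
noncomputable def liftP {D : ℕ} {ι γ : Type} {m : ℕ} (f : PJet ι γ m D → ℝ) :
    Ed D × Jet (ι ⊕ γ) m D → ℝ :=
  fun p => f (p.1, fun c => p.2 (Sum.inl c.1, c.2), fun l => p.2 (Sum.inr l, zeroIdx))

/-- Setting all the derivatives of g to zero in a local function of (u, g). -/
noncomputable def dropGDerivs {D : ℕ} {ι γ : Type} {m : ℕ}
    (f : Ed D × Jet (ι ⊕ γ) m D → ℝ) : PJet ι γ m D → ℝ :=
  fun p => f (p.1, fun w =>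
    match w with
    | (Sum.inl i, β) => p.2.1 (i, β)
    | (Sum.inr l, β) => if (β.1 : ℕ) = 0 then p.2.2 l else 0)

/-- Parameterized conservation law multiplier: F^a q_a = D_μ J^μ for every smooth u
and every constant g. -/
def ParamMultiplier {D : ℕ} {ι γ κ : Type} [Fintype κ] (m : ℕ) (Ω : Set (Ed D))
    (F q : κ → PJet ι γ m D → ℝ) (J : Fin (D + 1) → PJet ι γ m D → ℝ) : Prop :=
  ∀ u, SmoothFields Ω u → ∀ c : γ → ℝ, ∀ x ∈ Ω,
    (∑ a, F a (x, jet m u x, c) * q a (x, jet m u x, c)) =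
      Dvg (fun μ y => J μ (y, jet m u y, c)) x

/-- Solutions of the extended system F^a = 0, ∂_μ g_l = 0 on Ω. -/
def ExtSol {D : ℕ} {ι γ κ : Type} (m : ℕ) (Ω : Set (Ed D))
    (F : κ → PJet ι γ m D → ℝ) (u : ι → Ed D → ℝ) (g : γ → Ed D → ℝ) : Prop :=
  SmoothFields Ω u ∧ SmoothFields Ω g ∧
    (∀ a, ∀ x ∈ Ω, realizeP m (F a) u g x = 0) ∧
    (∀ l μ, ∀ x ∈ Ω, pd μ (g l) x = 0)

/-- Conservation law multiplier {q_a, θ^{μl}} for the extended system, with current J. -/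
def ExtMultiplier {D : ℕ} {ι γ κ : Type} [Fintype κ] [Fintype γ] (m : ℕ) (Ω : Set (Ed D))
    (F q : κ → PJet ι γ m D → ℝ) (θ : Fin (D + 1) → γ → PJet ι γ m D → ℝ)
    (J : Fin (D + 1) → PJet ι γ m D → ℝ) : Prop :=
  ∀ u g, SmoothFields Ω u → SmoothFields Ω g → ∀ x ∈ Ω,
    ((∑ a, realizeP m (F a) u g x * realizeP m (q a) u g x) +
      ∑ μ, ∑ l, pd μ (g l) x * realizeP m (θ μ l) u g x) =
    Dvg (fun μ => realizeP m (J μ) u g) x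

/-- j^μ_{(Fρ)} for an extended system. -/
noncomputable def jFrhoP {D : ℕ} {ι γ κ : Type} [Fintype ι] [DecidableEq ι] [Fintype γ]
    [Fintype κ] (m : ℕ) (F : κ → PJet ι γ m D → ℝ) (u : ι → Ed D → ℝ) (g : γ → Ed D → ℝ)
    (ρ : κ → Ed D → ℝ) (v : ι → Ed D → ℝ) (μ : Fin (D + 1)) : Ed D → ℝ :=
  bdryG m (fun c x => ∑ a, jpdP (F a) c (x, jet m u x, fun l => g l x) * ρ a x) v μ

/-- j^μ_{(F̃q)}|_{F̃=F} for an extended system. -/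
noncomputable def jFtilqP {D : ℕ} {ι γ κ : Type} [Fintype ι] [DecidableEq ι] [Fintype γ]
    [Fintype κ] (m : ℕ) (F q : κ → PJet ι γ m D → ℝ) (u : ι → Ed D → ℝ) (g : γ → Ed D → ℝ)
    (v : ι → Ed D → ℝ) (μ : Fin (D + 1)) : Ed D → ℝ :=
  bdryG m (fun c x =>
    ∑ a, realizeP m (F a) u g x * jpdP (q a) c (x, jet m u x, fun l => g l x)) v μ

/-- The adjoint equations E^i(F^aρ_a) for an extended system. -/
noncomputable def adjointOpP {D : ℕ} {ι γ κ : Type} [Fintype ι] [DecidableEq ι] [Fintype γ]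
    [Fintype κ] (m : ℕ) (F : κ → PJet ι γ m D → ℝ) (u : ι → Ed D → ℝ) (g : γ → Ed D → ℝ)
    (ρ : κ → Ed D → ℝ) (i : ι) : Ed D → ℝ :=
  fun x => ∑ β : MIdx m D, (-1 : ℝ) ^ (β.1 : ℕ) *
    pds (MIdx.toList β)
      (fun y => ∑ a, jpdP (F a) (i, β) (y, jet m u y, fun l => g l y) * ρ a y) x

/-- Equivalence of configuration-indexed currents relative to the extended system. -/
def EquivCurrentsExt {D : ℕ} {ι γ κ : Type} [Fintype ι] [Fintype γ] (m : ℕ) (Ω : Set (Ed D))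
    (F : κ → PJet ι γ m D → ℝ)
    (C1 C2 : (ι → Ed D → ℝ) → (γ → Ed D → ℝ) → Fin (D + 1) → Ed D → ℝ) : Prop :=
  ∃ (m' : ℕ) (Jb Jh : Fin (D + 1) → Ed D × Jet (ι ⊕ γ) m' D → ℝ),
    (∀ μ, ContDiff ℝ (⊤ : ℕ∞) (Jb μ)) ∧ (∀ μ, ContDiff ℝ (⊤ : ℕ∞) (Jh μ)) ∧
    (∀ u g, SmoothFields Ω u → SmoothFields Ω g → ∀ μ, ∀ x ∈ Ω,
      C1 u g μ x - C2 u g μ x =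
        realize m' (Jb μ) (Sum.elim u g) x + realize m' (Jh μ) (Sum.elim u g) x) ∧
    (∀ u g, SmoothFields Ω u → SmoothFields Ω g → ∀ x ∈ Ω,
      Dvg (fun μ => realize m' (Jb μ) (Sum.elim u g)) x = 0) ∧
    (∀ u g, ExtSol m Ω F u g → ∀ μ, ∀ x ∈ Ω, realize m' (Jh μ) (Sum.elim u g) x = 0)

/-- The auxiliary Lagrangian Ľ = F^aρ_a + (∂_μ g_l)ϑ^{μl} of an extended system,
as a local function of the combined fields ((u, g), (ρ, ϑ)). -/
noncomputable def Lcheck {D : ℕ} {ι γ κ : Type} [Fintype κ] [Fintype γ] {m : ℕ} (hm : 0 < m)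
    (F : κ → PJet ι γ m D → ℝ) :
    Ed D × Jet ((ι ⊕ γ) ⊕ (κ ⊕ Fin (D + 1) × γ)) m D → ℝ :=
  fun p =>
    (∑ a, F a (p.1, fun c => p.2 (Sum.inl (Sum.inl c.1), c.2),
        fun l => p.2 (Sum.inl (Sum.inr l), zeroIdx)) * p.2 (Sum.inr (Sum.inl a), zeroIdx)) +
    ∑ μ, ∑ l, p.2 (Sum.inl (Sum.inr l), oneIdx hm μ) * p.2 (Sum.inr (Sum.inr (μ, l)), zeroIdx)

section Statement18Aux

open MeasureTheory Metric Filter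

variable {D : ℕ}

lemma pd_congr_nhds {μ : Fin (D + 1)} {f g : Ed D → ℝ} {x : Ed D} (h : f =ᶠ[nhds x] g) :
    pd μ f x = pd μ g x := by
  unfold pd
  rw [h.fderiv_eq]

lemma pd_const' {μ : Fin (D + 1)} {c : ℝ} {x : Ed D} : pd μ (fun _ => c) x = 0 := by
  unfold pd
  rw [fderiv_fun_const]
  simp

lemma pd_zero_of_eventually {μ : Fin (D + 1)} {f : Ed D → ℝ} {x : Ed D}
    (h : f =ᶠ[nhds x] fun _ => (0 : ℝ)) : pd μ f x = 0 := by
  rw [pd_congr_nhds h, pd_const']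

lemma pds_eq_zero_of_isOpen {U : Set (Ed D)} (hU : IsOpen U) {g : Ed D → ℝ}
    (hg : ∀ y ∈ U, g y = 0) (l : List (Fin (D + 1))) : ∀ x ∈ U, pds l g x = 0 := by
  induction l with
  | nil => intro x hx; exact hg x hx
  | cons μ l ih =>
    intro x hx
    exact pd_zero_of_eventually (eventuallyEq_of_mem (hU.mem_nhds hx) fun y hy => ih y hy)

lemma pd_mul' {μ : Fin (D + 1)} {f g : Ed D → ℝ} {x : Ed D}
    (hf : DifferentiableAt ℝ f x) (hg : DifferentiableAt ℝ g x) :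
    pd μ (fun y => f y * g y) x = pd μ f x * g x + f x * pd μ g x := by
  unfold pd
  rw [fderiv_fun_mul hf hg]
  simp
  ring

lemma pd_sub' {μ : Fin (D + 1)} {f g : Ed D → ℝ} {x : Ed D}
    (hf : DifferentiableAt ℝ f x) (hg : DifferentiableAt ℝ g x) :
    pd μ (fun y => f y - g y) x = pd μ f x - pd μ g x := by
  unfold pd
  rw [fderiv_fun_sub hf hg]
  simp

lemma contDiffOn_pd {Ω : Set (Ed D)} (hΩ : IsOpen Ω) {f : Ed D → ℝ}
    (hf : ContDiffOn ℝ (⊤ : ℕ∞) f Ω) (μ : Fin (D + 1)) :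
    ContDiffOn ℝ (⊤ : ℕ∞) (pd μ f) Ω := by
  unfold pd
  exact (hf.fderiv_of_isOpen hΩ (by exact_mod_cast le_top)).clm_apply contDiffOn_const

lemma contDiffOn_pds {Ω : Set (Ed D)} (hΩ : IsOpen Ω) {f : Ed D → ℝ}
    (hf : ContDiffOn ℝ (⊤ : ℕ∞) f Ω) (l : List (Fin (D + 1))) :
    ContDiffOn ℝ (⊤ : ℕ∞) (pds l f) Ω := by
  induction l with
  | nil => exact hf
  | cons μ l ih => exact contDiffOn_pd hΩ ih μ

lemma contDiffOn_realize {ι : Type} [Fintype ι] {Ω : Set (Ed D)} (hΩ : IsOpen Ω) {mm : ℕ}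
    {f : Ed D × Jet ι mm D → ℝ} (hf : ContDiff ℝ (⊤ : ℕ∞) f) {u : ι → Ed D → ℝ}
    (hu : SmoothFields Ω u) : ContDiffOn ℝ (⊤ : ℕ∞) (realize mm f u) Ω := by
  have hjet : ContDiffOn ℝ (⊤ : ℕ∞) (fun x => jet mm u x) Ω := by
    rw [contDiffOn_pi]
    intro c
    exact contDiffOn_pds hΩ (hu c.1) (MIdx.toList c.2)
  exact hf.comp_contDiffOn (contDiffOn_id.prodMk hjet)

lemma differentiableAt_of_contDiffOn {Ω : Set (Ed D)} (hΩ : IsOpen Ω) {f : Ed D → ℝ}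
    (hf : ContDiffOn ℝ (⊤ : ℕ∞) f Ω) {x : Ed D} (hx : x ∈ Ω) : DifferentiableAt ℝ f x :=
  (hf.contDiffAt (hΩ.mem_nhds hx)).differentiableAt (by simp)

/-- The divergence of a smooth compactly supported current integrates to zero. -/
lemma integral_Dvg_eq_zero (Z : Fin (D + 1) → Ed D → ℝ)
    (hZ : ∀ μ, ContDiff ℝ (⊤ : ℕ∞) (Z μ)) {K : Set (Ed D)} (hK : IsCompact K)
    (hsupp : ∀ μ, ∀ x, x ∉ K → Z μ x = 0) : ∫ x, Dvg Z x = 0 := by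
  obtain ⟨r, hr⟩ := hK.isBounded.subset_closedBall 0
  set R : ℝ := |r| + 1 with hR
  have hrR : r < R := lt_of_le_of_lt (le_abs_self r) (by simp [hR])
  have hRpos : (0 : ℝ) < R := by positivity
  set a : Ed D := fun _ => -R with ha
  set b : Ed D := fun _ => R with hb
  have hle : a ≤ b := fun i => by have := abs_nonneg r; simp only [ha, hb]; linarith
  have hout : ∀ y : Ed D, ∀ i : Fin (D + 1), R ≤ |y i| → ∀ μ, Z μ y = 0 := by
    intro y i hy μ
    apply hsupp μ
    intro hyK
    have h1 := hr hyK
    rw [Metric.mem_closedBall, dist_zero_right] at h1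
    have h2 : |y i| ≤ ‖y‖ := by simpa using norm_le_pi_norm y i
    linarith
  have Hc : ∀ i, ContinuousOn (Z i) (Set.Icc a b) := fun i => (hZ i).continuous.continuousOn
  have Hd : ∀ x ∈ (Set.pi Set.univ fun i => Set.Ioo (a i) (b i)) \ (∅ : Set (Ed D)), ∀ i,
      HasFDerivAt (Z i) (fderiv ℝ (Z i) x) x := fun x _ i =>
    (((hZ i).differentiable (by simp)) x).hasFDerivAt
  have hdiv_cont : Continuous fun x => ∑ i, fderiv ℝ (Z i) x (Pi.single i 1) := by
    apply continuous_finset_sum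
    intro i _
    exact ((hZ i).continuous_fderiv (by simp)).clm_apply continuous_const
  have Hi : IntegrableOn (fun x => ∑ i, fderiv ℝ (Z i) x (Pi.single i 1)) (Set.Icc a b) :=
    hdiv_cont.continuousOn.integrableOn_compact isCompact_Icc
  have key := MeasureTheory.integral_divergence_of_hasFDerivAt_off_countable' a b hle
    Z (fun i x => fderiv ℝ (Z i) x) ∅ Set.countable_empty Hc Hd Hi
  have hface : ∀ (i : Fin (D + 1)) (c : ℝ), R ≤ |c| →
      (∫ x in Set.Icc (a ∘ i.succAbove) (b ∘ i.succAbove), Z i (i.insertNth c x)) = 0 := by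
    intro i c hc
    have hz : ∀ x, Z i (i.insertNth c x) = 0 := by
      intro x
      apply hout _ i _ i
      rw [Fin.insertNth_apply_same]
      exact hc
    simp [hz]
  have hcompl : ∀ x, x ∉ Set.Icc a b → Dvg Z x = 0 := by
    intro x hx
    have hxi : ∃ i, x i < a i ∨ b i < x i := by
      by_contra hcon
      push_neg at hcon
      exact hx (Set.mem_Icc.2 ⟨fun i => (hcon i).1, fun i => (hcon i).2⟩)
    obtain ⟨i, hi⟩ := hxi
    have hxo : R < |x i| := by
      rcases hi with h | h
      · have h' : x i < -R := h
        exact lt_abs.2 (Or.inr (by linarith))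
      · have h' : R < x i := h
        exact lt_abs.2 (Or.inl h')
    have hopen : IsOpen {y : Ed D | R < |y i|} :=
      isOpen_lt continuous_const ((continuous_apply i).abs)
    have hnb : ∀ᶠ y in nhds x, ∀ μ, Z μ y = 0 :=
      eventually_of_mem (hopen.mem_nhds hxo) fun y hy μ => hout y i (le_of_lt hy) μ
    show (∑ μ, pd μ (Z μ) x) = 0
    refine Finset.sum_eq_zero fun μ _ => ?_
    exact pd_zero_of_eventually (hnb.mono fun y hy => hy μ)
  have hIcc : ∫ x in Set.Icc a b, Dvg Z x = ∫ x, Dvg Z x :=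
    setIntegral_eq_integral_of_forall_compl_eq_zero hcompl
  have hDvg_eq : (fun x => Dvg Z x) = fun x => ∑ i, fderiv ℝ (Z i) x (Pi.single i 1) := rfl
  rw [← hIcc]
  rw [show (∫ x in Set.Icc a b, Dvg Z x)
      = ∫ x in Set.Icc a b, ∑ i, fderiv ℝ (Z i) x (Pi.single i 1) from by rw [hDvg_eq]]
  rw [key]
  refine Finset.sum_eq_zero fun i _ => ?_
  rw [hface i (b i) (le_abs_self R), hface i (a i) (by show R ≤ |-R|; rw [abs_neg]; exact le_abs_self R), sub_self]

/-- Fundamental lemma of the calculus of variations, `≤` half. -/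
lemma bump_test_le {Ω : Set (Ed D)} (hΩ : IsOpen Ω) {ψ : Ed D → ℝ}
    (hψ : ContinuousOn ψ Ω) {x₀ : Ed D} (hx₀ : x₀ ∈ Ω)
    (h : ∀ g : Ed D → ℝ, ContDiff ℝ (⊤ : ℕ∞) g → HasCompactSupport g → tsupport g ⊆ Ω →
      ∫ x, g x * ψ x = 0) : ψ x₀ ≤ 0 := by
  by_contra hpos
  push_neg at hpos
  have hcont : ContinuousAt ψ x₀ := hψ.continuousAt (hΩ.mem_nhds hx₀)
  have hev : ∀ᶠ y in nhds x₀, ψ x₀ / 2 < ψ y :=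
    hcont.eventually (eventually_gt_nhds (half_lt_self hpos))
  obtain ⟨r, hrpos, hball⟩ :=
    Metric.mem_nhds_iff.1 (Filter.inter_mem (hΩ.mem_nhds hx₀) hev)
  set f : ContDiffBump x₀ := ⟨r / 4, r / 2, by positivity, by linarith⟩ with hf
  have hsub : closedBall x₀ (r / 2) ⊆ ball x₀ r := closedBall_subset_ball (by linarith)
  have htsupp : tsupport (f : Ed D → ℝ) = closedBall x₀ (r / 2) := f.tsupport_eq
  have hsubΩ : tsupport (f : Ed D → ℝ) ⊆ Ω := by
    rw [htsupp]
    exact fun y hy => (hball (hsub hy)).1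
  have h0 : ∫ x, f x * ψ x = 0 := h f f.contDiff f.hasCompactSupport hsubΩ
  have hφ0 : ∀ x, x ∉ closedBall x₀ (r / 2) → f x * ψ x = 0 := by
    intro x hx
    have hfx : f x = 0 := by
      apply image_eq_zero_of_notMem_tsupport
      rw [htsupp]; exact hx
    rw [hfx, zero_mul]
  have hφcont : Continuous fun x => f x * ψ x := by
    rw [continuous_iff_continuousAt]
    intro x
    by_cases hx : x ∈ Ω
    · exact f.continuous.continuousAt.mul (hψ.continuousAt (hΩ.mem_nhds hx))
    · have hxn : x ∉ closedBall x₀ (r / 2) := fun hc => hx ((hball (hsub hc)).1)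
      have heq : (fun x => f x * ψ x) =ᶠ[nhds x] fun _ => (0 : ℝ) :=
        eventuallyEq_of_mem (Metric.isClosed_closedBall.isOpen_compl.mem_nhds hxn)
          fun y hy => hφ0 y hy
      exact heq.continuousAt
  have hφsupp : HasCompactSupport fun x => f x * ψ x := f.hasCompactSupport.mul_right
  have hφint : Integrable fun x => f x * ψ x :=
    hφcont.integrable_of_hasCompactSupport hφsupp
  have hφnn : ∀ x, 0 ≤ f x * ψ x := by
    intro x
    by_cases hx : x ∈ closedBall x₀ (r / 2)
    · have hψx : 0 < ψ x := lt_trans (half_pos hpos) (hball (hsub hx)).2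
      exact mul_nonneg f.nonneg (le_of_lt hψx)
    · rw [hφ0 x hx]
  have h1 : ∫ x in closedBall x₀ (r / 4), f x * ψ x ≤ ∫ x, f x * ψ x :=
    setIntegral_le_integral hφint (Filter.Eventually.of_forall hφnn)
  have h2 : ∫ _x in closedBall x₀ (r / 4), (ψ x₀ / 2) ≤
      ∫ x in closedBall x₀ (r / 4), f x * ψ x := by
    apply setIntegral_mono_on
    · exact integrableOn_const (isCompact_closedBall _ _).measure_lt_top.ne
    · exact hφint.integrableOn
    · exact measurableSet_closedBall
    · intro x hx
      have hx2 : x ∈ closedBall x₀ (r / 2) := closedBall_subset_closedBall (by linarith) hx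
      have hfx : f x = 1 := f.one_of_mem_closedBall hx
      rw [hfx, one_mul]
      exact le_of_lt (hball (hsub hx2)).2
  have h3 : 0 < ∫ _x in closedBall x₀ (r / 4), (ψ x₀ / 2) := by
    rw [setIntegral_const, smul_eq_mul]
    have hv : 0 < (volume (closedBall x₀ (r / 4))).toReal :=
      ENNReal.toReal_pos (measure_closedBall_pos volume x₀ (by positivity)).ne'
        (isCompact_closedBall _ _).measure_lt_top.ne
    have := half_pos hpos
    positivity
  linarith

/-- Fundamental lemma of the calculus of variations. -/
lemma bump_test_eq {Ω : Set (Ed D)} (hΩ : IsOpen Ω) {ψ : Ed D → ℝ}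
    (hψ : ContinuousOn ψ Ω) {x₀ : Ed D} (hx₀ : x₀ ∈ Ω)
    (h : ∀ g : Ed D → ℝ, ContDiff ℝ (⊤ : ℕ∞) g → HasCompactSupport g → tsupport g ⊆ Ω →
      ∫ x, g x * ψ x = 0) : ψ x₀ = 0 := by
  have hle := bump_test_le hΩ hψ hx₀ h
  have hge : (fun x => -ψ x) x₀ ≤ 0 := by
    apply bump_test_le hΩ hψ.neg hx₀
    intro g hg1 hg2 hg3
    have hi := h g hg1 hg2 hg3
    calc ∫ x, g x * (-ψ x) = -∫ x, g x * ψ x := by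
          rw [← integral_neg]
          congr 1
          funext x
          ring
    _ = 0 := by rw [hi, neg_zero]
  simp only at hge
  linarith [neg_nonpos.1 hge]

end Statement18Aux

/-- If {g·q_a[u], ϑ^μ[u]} is a multiplier of the trivial extension for a
current J^μ[u,g], then ϑ^μ is a conserved current of F = 0 with multiplier q, gϑ^μ is a
conserved current of the trivial extension with the same multiplier, and gϑ^μ − J^μ is
identically conserved. -/
theorem statement18 (D N M m : ℕ) (Ω : Set (Ed D)) (hΩ : IsOpen Ω)
    (F : Fin M → Ed D × Jet (Fin N) m D → ℝ) (hF : ∀ a, ContDiff ℝ (⊤ : ℕ∞) (F a))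
    (q : Fin M → Ed D × Jet (Fin N) m D → ℝ) (hq : ∀ a, ContDiff ℝ (⊤ : ℕ∞) (q a))
    (ϑ : Fin (D + 1) → Ed D × Jet (Fin N) m D → ℝ) (hϑ : ∀ μ, ContDiff ℝ (⊤ : ℕ∞) (ϑ μ))
    (J : Fin (D + 1) → Ed D × Jet (Fin N ⊕ Unit) m D → ℝ)
    (hJ : ∀ μ, ContDiff ℝ (⊤ : ℕ∞) (J μ))
    (hmult : ∀ (u : Fin N → Ed D → ℝ) (g : Ed D → ℝ),
      SmoothFields Ω u → ContDiffOn ℝ (⊤ : ℕ∞) g Ω → ∀ x ∈ Ω,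
      ((∑ a, realize m (F a) u x * (g x * realize m (q a) u x)) +
        ∑ μ, pd μ g x * realize m (ϑ μ) u x) =
      Dvg (fun μ => realize m (J μ) (Sum.elim u (fun _ => g))) x) :
    -- (i) F^a q_a = D_μ ϑ^μ for every smooth u:
    (∀ u, SmoothFields Ω u → ∀ x ∈ Ω,
      (∑ a, realize m (F a) u x * realize m (q a) u x) =
        Dvg (fun μ => realize m (ϑ μ) u) x) ∧
    -- (ii) gϑ^μ is a conserved current of the trivial extension with multiplier {gq, ϑ}:
    (∀ (u : Fin N → Ed D → ℝ) (g : Ed D → ℝ),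
      SmoothFields Ω u → ContDiffOn ℝ (⊤ : ℕ∞) g Ω → ∀ x ∈ Ω,
      ((∑ a, realize m (F a) u x * (g x * realize m (q a) u x)) +
        ∑ μ, pd μ g x * realize m (ϑ μ) u x) =
      Dvg (fun μ y => g y * realize m (ϑ μ) u y) x) ∧
    -- and gϑ^μ − J^μ is identically conserved:
    (∀ (u : Fin N → Ed D → ℝ) (g : Ed D → ℝ),
      SmoothFields Ω u → ContDiffOn ℝ (⊤ : ℕ∞) g Ω → ∀ x ∈ Ω,
      Dvg (fun μ y => g y * realize m (ϑ μ) u y -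
        realize m (J μ) (Sum.elim u (fun _ => g)) y) x = 0) := by
  classical
  have hDA : ∀ (u : Fin N → Ed D → ℝ), SmoothFields Ω u → ∀ μ,
      ContDiffOn ℝ (⊤ : ℕ∞) (realize m (ϑ μ) u) Ω :=
    fun u hu μ => contDiffOn_realize hΩ (hϑ μ) hu
  have hsum_elim : ∀ (u : Fin N → Ed D → ℝ), SmoothFields Ω u → ∀ g : Ed D → ℝ,
      ContDiffOn ℝ (⊤ : ℕ∞) g Ω → SmoothFields Ω (Sum.elim u (fun _ : Unit => g)) := by
    intro u hu g hg i
    cases i with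
    | inl a => exact hu a
    | inr _ => exact hg
  -- Part (i)
  have part1 : ∀ u, SmoothFields Ω u → ∀ x ∈ Ω,
      (∑ a, realize m (F a) u x * realize m (q a) u x) =
        Dvg (fun μ => realize m (ϑ μ) u) x := by
    intro u hu x₀ hx₀
    have hsmoothA : ContinuousOn
        (fun x => ∑ a, realize m (F a) u x * realize m (q a) u x) Ω :=
      continuousOn_finset_sum _ fun a _ =>
        (contDiffOn_realize hΩ (hF a) hu).continuousOn.mul
          (contDiffOn_realize hΩ (hq a) hu).continuousOn
    have hsmoothT : ContinuousOn (Dvg fun μ => realize m (ϑ μ) u) Ω := by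
      show ContinuousOn (fun x => ∑ μ, pd μ (realize m (ϑ μ) u) x) Ω
      exact continuousOn_finset_sum _ fun μ _ =>
        (contDiffOn_pd hΩ (hDA u hu μ) μ).continuousOn
    have hψcont : ContinuousOn (fun x =>
        (∑ a, realize m (F a) u x * realize m (q a) u x) -
          Dvg (fun μ => realize m (ϑ μ) u) x) Ω := hsmoothA.sub hsmoothT
    have hint : ∀ g : Ed D → ℝ, ContDiff ℝ (⊤ : ℕ∞) g → HasCompactSupport g →
        tsupport g ⊆ Ω →
        ∫ x, g x * ((∑ a, realize m (F a) u x * realize m (q a) u x) -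
          Dvg (fun μ => realize m (ϑ μ) u) x) = 0 := by
      intro g hgC hgK hgΩ
      have hsm_g : SmoothFields Ω (Sum.elim u (fun _ : Unit => g)) :=
        hsum_elim u hu g hgC.contDiffOn
      have hsm_0 : SmoothFields Ω (Sum.elim u (fun _ : Unit => fun _ => (0 : ℝ))) :=
        hsum_elim u hu _ contDiffOn_const
      set Z : Fin (D + 1) → Ed D → ℝ := fun μ y =>
        if y ∈ Ω then realize m (J μ) (Sum.elim u fun _ => g) y
          - realize m (J μ) (Sum.elim u fun _ => fun _ => (0 : ℝ)) y
          - g y * realize m (ϑ μ) u y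
        else 0 with hZdef
      have hinner : ∀ μ, ContDiffOn ℝ (⊤ : ℕ∞)
          (fun y => realize m (J μ) (Sum.elim u fun _ => g) y
            - realize m (J μ) (Sum.elim u fun _ => fun _ => (0 : ℝ)) y
            - g y * realize m (ϑ μ) u y) Ω := fun μ =>
        ((contDiffOn_realize hΩ (hJ μ) hsm_g).sub
          (contDiffOn_realize hΩ (hJ μ) hsm_0)).sub (hgC.contDiffOn.mul (hDA u hu μ))
      have hZeqΩ : ∀ μ, ∀ y ∈ Ω, Z μ y =
          realize m (J μ) (Sum.elim u fun _ => g) y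
            - realize m (J μ) (Sum.elim u fun _ => fun _ => (0 : ℝ)) y
            - g y * realize m (ϑ μ) u y := by
        intro μ y hy
        rw [hZdef]
        simp only [if_pos hy]
      have hjets : ∀ y, y ∉ tsupport g → ∀ l : List (Fin (D + 1)), pds l g y = 0 := by
        intro y hy l
        exact pds_eq_zero_of_isOpen (isClosed_tsupport g).isOpen_compl
          (fun z hz => image_eq_zero_of_notMem_tsupport hz) l y hy
      have hpds0 : ∀ (l : List (Fin (D + 1))) (y : Ed D), pds l (fun _ => (0 : ℝ)) y = 0 :=
        fun l y => pds_eq_zero_of_isOpen isOpen_univ (fun _ _ => rfl) l y (Set.mem_univ y)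
      have hZ0 : ∀ μ, ∀ y, y ∉ tsupport g → Z μ y = 0 := by
        intro μ y hy
        by_cases hyΩ : y ∈ Ω
        · rw [hZeqΩ μ y hyΩ]
          have hjeq : jet m (Sum.elim u fun _ : Unit => g) y =
              jet m (Sum.elim u fun _ : Unit => fun _ => (0 : ℝ)) y := by
            funext c
            rcases c with ⟨i, β⟩
            cases i with
            | inl a => rfl
            | inr l =>
              show pds (MIdx.toList β) g y = pds (MIdx.toList β) (fun _ => (0 : ℝ)) y
              rw [hjets y hy, hpds0]
          have hgy : g y = 0 := image_eq_zero_of_notMem_tsupport hy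
          show J μ (y, jet m (Sum.elim u fun _ => g) y)
              - J μ (y, jet m (Sum.elim u fun _ => fun _ => (0 : ℝ)) y)
              - g y * realize m (ϑ μ) u y = 0
          rw [hjeq, hgy]
          ring
        · rw [hZdef]
          simp only [if_neg hyΩ]
      have hZsmooth : ∀ μ, ContDiff ℝ (⊤ : ℕ∞) (Z μ) := by
        intro μ
        rw [contDiff_iff_contDiffAt]
        intro x
        by_cases hx : x ∈ Ω
        · have heq : Z μ =ᶠ[nhds x]
              (fun y => realize m (J μ) (Sum.elim u fun _ => g) y
                - realize m (J μ) (Sum.elim u fun _ => fun _ => (0 : ℝ)) y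
                - g y * realize m (ϑ μ) u y) :=
            Filter.eventuallyEq_of_mem (hΩ.mem_nhds hx) fun y hy => hZeqΩ μ y hy
          exact ((hinner μ).contDiffAt (hΩ.mem_nhds hx)).congr_of_eventuallyEq heq
        · have hx' : x ∉ tsupport g := fun hc => hx (hgΩ hc)
          have heq : Z μ =ᶠ[nhds x] fun _ => (0 : ℝ) :=
            Filter.eventuallyEq_of_mem
              ((isClosed_tsupport g).isOpen_compl.mem_nhds hx') fun y hy => hZ0 μ y hy
          exact contDiffAt_const.congr_of_eventuallyEq heq
      have hdvg : ∀ x, Dvg Z x = g x *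
          ((∑ a, realize m (F a) u x * realize m (q a) u x) -
            Dvg (fun μ => realize m (ϑ μ) u) x) := by
        intro x
        by_cases hx : x ∈ Ω
        · have dJg : ∀ μ, DifferentiableAt ℝ
              (realize m (J μ) (Sum.elim u fun _ => g)) x := fun μ =>
            differentiableAt_of_contDiffOn hΩ (contDiffOn_realize hΩ (hJ μ) hsm_g) hx
          have dJ0 : ∀ μ, DifferentiableAt ℝ
              (realize m (J μ) (Sum.elim u fun _ => fun _ => (0 : ℝ))) x := fun μ =>
            differentiableAt_of_contDiffOn hΩ (contDiffOn_realize hΩ (hJ μ) hsm_0) hx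
          have dg : DifferentiableAt ℝ g x :=
            differentiableAt_of_contDiffOn hΩ hgC.contDiffOn hx
          have dϑ : ∀ μ, DifferentiableAt ℝ (realize m (ϑ μ) u) x := fun μ =>
            differentiableAt_of_contDiffOn hΩ (hDA u hu μ) hx
          have hZpd : ∀ μ, pd μ (Z μ) x =
              pd μ (realize m (J μ) (Sum.elim u fun _ => g)) x
              - pd μ (realize m (J μ) (Sum.elim u fun _ => fun _ => (0 : ℝ))) x
              - (pd μ g x * realize m (ϑ μ) u x + g x * pd μ (realize m (ϑ μ) u) x) := by
            intro μ
            have heq : Z μ =ᶠ[nhds x]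
                (fun y => realize m (J μ) (Sum.elim u fun _ => g) y
                  - realize m (J μ) (Sum.elim u fun _ => fun _ => (0 : ℝ)) y
                  - g y * realize m (ϑ μ) u y) :=
              Filter.eventuallyEq_of_mem (hΩ.mem_nhds hx) fun y hy => hZeqΩ μ y hy
            rw [pd_congr_nhds heq,
              pd_sub' ((dJg μ).fun_sub (dJ0 μ)) (dg.fun_mul (dϑ μ)),
              pd_sub' (dJg μ) (dJ0 μ), pd_mul' dg (dϑ μ)]
          have hm_g : ((∑ a, realize m (F a) u x * (g x * realize m (q a) u x)) +
              ∑ μ, pd μ g x * realize m (ϑ μ) u x) =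
              ∑ μ, pd μ (realize m (J μ) (Sum.elim u fun _ => g)) x :=
            hmult u g hu hgC.contDiffOn x hx
          have hm_0 := hmult u (fun _ => (0 : ℝ)) hu contDiffOn_const x hx
          have hDvgJ0 : (∑ μ, pd μ
              (realize m (J μ) (Sum.elim u fun _ => fun _ => (0 : ℝ)))  x) = 0 := by
            have : ((∑ a, realize m (F a) u x * ((fun _ => (0:ℝ)) x * realize m (q a) u x)) +
                ∑ μ, pd μ (fun _ => (0:ℝ)) x * realize m (ϑ μ) u x) =
                ∑ μ, pd μ (realize m (J μ) (Sum.elim u fun _ => fun _ => (0 : ℝ))) x := hm_0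
            rw [← this]
            simp [pd_const']
          have hsplit : (∑ μ, pd μ (Z μ) x) =
              (∑ μ, pd μ (realize m (J μ) (Sum.elim u fun _ => g)) x)
              - (∑ μ, pd μ (realize m (J μ) (Sum.elim u fun _ => fun _ => (0 : ℝ))) x)
              - ((∑ μ, pd μ g x * realize m (ϑ μ) u x) +
                g x * ∑ μ, pd μ (realize m (ϑ μ) u) x) := by
            rw [Finset.sum_congr rfl fun μ _ => hZpd μ]
            rw [Finset.sum_sub_distrib, Finset.sum_sub_distrib, Finset.sum_add_distrib,
              Finset.mul_sum]
          have hgA : (∑ a, realize m (F a) u x * (g x * realize m (q a) u x)) =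
              g x * ∑ a, realize m (F a) u x * realize m (q a) u x := by
            rw [Finset.mul_sum]
            exact Finset.sum_congr rfl fun a _ => by ring
          show (∑ μ, pd μ (Z μ) x) = _
          rw [hsplit, ← hm_g, hDvgJ0, hgA]
          show _ = g x * ((∑ a, realize m (F a) u x * realize m (q a) u x) -
              ∑ μ, pd μ (realize m (ϑ μ) u) x)
          ring
        · have hx' : x ∉ tsupport g := fun hc => hx (hgΩ hc)
          have hgx : g x = 0 := image_eq_zero_of_notMem_tsupport hx'
          have hnb : ∀ᶠ y in nhds x, ∀ μ, Z μ y = 0 :=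
            Filter.eventually_of_mem
              ((isClosed_tsupport g).isOpen_compl.mem_nhds hx') fun y hy μ => hZ0 μ y hy
          have : Dvg Z x = 0 := by
            show (∑ μ, pd μ (Z μ) x) = 0
            exact Finset.sum_eq_zero fun μ _ =>
              pd_zero_of_eventually (hnb.mono fun y hy => hy μ)
          rw [this, hgx, zero_mul]
      have hIz := integral_Dvg_eq_zero Z hZsmooth hgK (fun μ x hx => hZ0 μ x hx)
      calc ∫ x, g x * ((∑ a, realize m (F a) u x * realize m (q a) u x) -
            Dvg (fun μ => realize m (ϑ μ) u) x)
          = ∫ x, Dvg Z x := by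
            congr 1
            funext x
            rw [hdvg x]
        _ = 0 := hIz
    have := bump_test_eq hΩ hψcont hx₀ hint
    exact sub_eq_zero.1 this
  -- Part (ii)
  have part2 : ∀ (u : Fin N → Ed D → ℝ) (g : Ed D → ℝ),
      SmoothFields Ω u → ContDiffOn ℝ (⊤ : ℕ∞) g Ω → ∀ x ∈ Ω,
      ((∑ a, realize m (F a) u x * (g x * realize m (q a) u x)) +
        ∑ μ, pd μ g x * realize m (ϑ μ) u x) =
      Dvg (fun μ y => g y * realize m (ϑ μ) u y) x := by
    intro u g hu hg x hx
    have dg : DifferentiableAt ℝ g x := differentiableAt_of_contDiffOn hΩ hg hx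
    have dϑ : ∀ μ, DifferentiableAt ℝ (realize m (ϑ μ) u) x := fun μ =>
      differentiableAt_of_contDiffOn hΩ (hDA u hu μ) hx
    have h1 : Dvg (fun μ y => g y * realize m (ϑ μ) u y) x =
        (∑ μ, pd μ g x * realize m (ϑ μ) u x) +
          g x * ∑ μ, pd μ (realize m (ϑ μ) u) x := by
      show (∑ μ, pd μ (fun y => g y * realize m (ϑ μ) u y) x) = _
      rw [Finset.sum_congr rfl fun μ _ => pd_mul' dg (dϑ μ)]
      rw [Finset.sum_add_distrib, Finset.mul_sum]
    have hgA : (∑ a, realize m (F a) u x * (g x * realize m (q a) u x)) =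
        g x * ∑ a, realize m (F a) u x * realize m (q a) u x := by
      rw [Finset.mul_sum]
      exact Finset.sum_congr rfl fun a _ => by ring
    have hp1 : (∑ a, realize m (F a) u x * realize m (q a) u x) =
        ∑ μ, pd μ (realize m (ϑ μ) u) x := part1 u hu x hx
    rw [h1, hgA, ← hp1]
    ring
  refine ⟨part1, part2, ?_⟩
  -- Part (iii)
  intro u g hu hg x hx
  have hsm_g : SmoothFields Ω (Sum.elim u (fun _ : Unit => g)) := hsum_elim u hu g hg
  have dgϑ : ∀ μ, DifferentiableAt ℝ (fun y => g y * realize m (ϑ μ) u y) x := fun μ =>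
    (differentiableAt_of_contDiffOn hΩ hg hx).mul
      (differentiableAt_of_contDiffOn hΩ (hDA u hu μ) hx)
  have dJ : ∀ μ, DifferentiableAt ℝ (realize m (J μ) (Sum.elim u fun _ => g)) x := fun μ =>
    differentiableAt_of_contDiffOn hΩ (contDiffOn_realize hΩ (hJ μ) hsm_g) hx
  have h2 := part2 u g hu hg x hx
  have hmg := hmult u g hu hg x hx
  show (∑ μ, pd μ (fun y => g y * realize m (ϑ μ) u y -
      realize m (J μ) (Sum.elim u fun _ => g) y) x) = 0
  rw [Finset.sum_congr rfl fun μ _ => pd_sub' (dgϑ μ) (dJ μ), Finset.sum_sub_distrib]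
  have e1 : (∑ μ, pd μ (fun y => g y * realize m (ϑ μ) u y) x) =
      Dvg (fun μ y => g y * realize m (ϑ μ) u y) x := rfl
  have e2 : (∑ μ, pd μ (realize m (J μ) (Sum.elim u fun _ => g)) x) =
      Dvg (fun μ => realize m (J μ) (Sum.elim u fun _ => g)) x := rfl
  rw [e1, e2, ← h2, ← hmg, sub_self]

end Paper
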